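/- A finitely generated 𝔤-module on which 𝔫̄ acts locally finitely and 𝔥 acts diagonalisably is generated, as a U(𝔫)-module, by a finite set of weight vectors. -/

import Mathlib

open Module

variable {K 𝔤 : Type*}

section

variable [Field K] [LieRing 𝔤] [LieAlgebra K 𝔤] (𝔥 : LieSubalgebra K 𝔤)
  (M : Type*) [AddCommGroup M] [Module K M] [LieRingModule 𝔤 M] [LieModule K 𝔤 M]

/-- The weight space of a Lie module for a linear character of a subalgebra. -/
def wtSpace (lam : 𝔥 →ₗ[K] K) : Submodule K M where
  carrier := {m | ∀ X : 𝔥, ⁅(X : 𝔤), m⁆ = lam X • m}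
  add_mem' := fun ha hb X => by rw [lie_add, ha X, hb X, smul_add]
  zero_mem' := fun X => by simp
  smul_mem' := fun c a ha X => by rw [lie_smul, ha X, smul_comm]

variable {𝔥 M}

lemma mem_wtSpace {lam : 𝔥 →ₗ[K] K} {m : M} :
    m ∈ wtSpace 𝔥 M lam ↔ ∀ X : 𝔥, ⁅(X : 𝔤), m⁆ = lam X • m := Iff.rfl

/-- Components of a weight decomposition of an element of an `𝔥`-stable subspace lie in
that subspace. -/
lemma wt_component_mem (U : Submodule K M)
    (hU : ∀ (H : 𝔥) (u : M), u ∈ U → ⁅(H : 𝔤), u⁆ ∈ U)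
    (F : Finset (𝔥 →ₗ[K] K)) :
    ∀ x : (𝔥 →ₗ[K] K) → M, (∀ lam, x lam ∈ wtSpace 𝔥 M lam) →
      (∑ lam ∈ F, x lam) ∈ U → ∀ mu ∈ F, x mu ∈ U := by
  induction F using Finset.strongInduction with
  | _ F ih =>
    classical
    intro x hx hsum mu hmu
    by_cases hF : ∃ nu ∈ F, nu ≠ mu
    · obtain ⟨nu, hnuF, hne⟩ := hF
      have hH : ∃ H : 𝔥, mu H ≠ nu H := by
        by_contra h
        push_neg at h
        exact hne (LinearMap.ext fun H => (h H).symm)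
      obtain ⟨H, hH⟩ := hH
      set y : (𝔥 →ₗ[K] K) → M := fun lam => (lam H - nu H) • x lam with hy
      have hywt : ∀ lam, y lam ∈ wtSpace 𝔥 M lam := fun lam =>
        Submodule.smul_mem _ _ (hx lam)
      have hysum : (∑ lam ∈ F.erase nu, y lam) ∈ U := by
        have h1 : (∑ lam ∈ F.erase nu, y lam) = ∑ lam ∈ F, y lam :=
          Finset.sum_erase _ (by show (nu H - nu H) • x nu = 0; simp)
        have h2 : (∑ lam ∈ F, y lam)
            = ⁅(H : 𝔤), ∑ lam ∈ F, x lam⁆ - nu H • ∑ lam ∈ F, x lam := by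
          rw [show ⁅(H : 𝔤), ∑ lam ∈ F, x lam⁆
              = ∑ lam ∈ F, ⁅(H : 𝔤), x lam⁆ from
              map_sum (LieModule.toEnd K 𝔤 M (H : 𝔤)) _ _,
            Finset.smul_sum, ← Finset.sum_sub_distrib]
          refine Finset.sum_congr rfl fun lam _ => ?_
          show (lam H - nu H) • x lam = ⁅(H : 𝔤), x lam⁆ - nu H • x lam
          rw [mem_wtSpace.mp (hx lam) H, sub_smul]
        rw [h1, h2]
        exact Submodule.sub_mem _ (hU H _ hsum) (Submodule.smul_mem _ _ hsum)
      have hmu' : mu ∈ F.erase nu := Finset.mem_erase.mpr ⟨fun h => hne h.symm, hmu⟩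
      have hmem := ih (F.erase nu) (Finset.erase_ssubset hnuF) y hywt hysum mu hmu'
      have hc : (mu H - nu H) ≠ 0 := sub_ne_zero.mpr hH
      have hmem2 := Submodule.smul_mem U (mu H - nu H)⁻¹ hmem
      rw [hy] at hmem2
      simp only at hmem2
      rwa [smul_smul, inv_mul_cancel₀ hc, one_smul] at hmem2
    · push_neg at hF
      have hFmu : F = {mu} := Finset.eq_singleton_iff_unique_mem.mpr
        ⟨hmu, fun nu hnu => hF nu hnu⟩
      rw [hFmu, Finset.sum_singleton] at hsum
      exact hsum

end

theorem Obar_module_generated_over_n_by_weight_vectors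
    [Field K] [CharZero K] [LieRing 𝔤] [LieAlgebra K 𝔤] [FiniteDimensional K 𝔤]
    [LieAlgebra.IsSemisimple K 𝔤]
    (𝔥 𝔫 𝔫' : LieSubalgebra K 𝔤) (hab : IsLieAbelian 𝔥)
    -- triangular decomposition 𝔤 = 𝔫̄ ⊕ 𝔥 ⊕ 𝔫 (here 𝔫' denotes 𝔫̄)
    (htri : 𝔫'.toSubmodule ⊔ 𝔥.toSubmodule ⊔ 𝔫.toSubmodule = ⊤)
    (hhn : ∀ (H : 𝔥) (Y : 𝔫), ⁅(H : 𝔤), (Y : 𝔤)⁆ ∈ 𝔫)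
    (hhn' : ∀ (H : 𝔥) (Y : 𝔫'), ⁅(H : 𝔤), (Y : 𝔤)⁆ ∈ 𝔫')
    (M : Type*) [AddCommGroup M] [Module K M] [LieRingModule 𝔤 M] [LieModule K 𝔤 M]
    [DecidableEq (𝔥 →ₗ[K] K)]
    -- M lies in category 𝒪̄ :
    (hfg : ∃ s : Finset M, LieSubmodule.lieSpan K 𝔤 (s : Set M) = ⊤)
    (hlf : ∀ m : M, ∃ W : Submodule K M, m ∈ W ∧ FiniteDimensional K ↥W ∧
      ∀ Y : 𝔫', ∀ w ∈ W, ⁅(Y : 𝔤), w⁆ ∈ W)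
    (hdiag : DirectSum.IsInternal (wtSpace 𝔥 M)) :
    -- M is generated as a U(𝔫)-module by a finite set of weight vectors
    ∃ s : Finset M, (∀ x ∈ s, ∃ lam : 𝔥 →ₗ[K] K, x ∈ wtSpace 𝔥 M lam) ∧
      LieSubmodule.lieSpan K ↥𝔫 (s : Set M) = ⊤ := by
  classical
  obtain ⟨t, ht⟩ := hfg
  choose Wf hWmem hWfd hWstab using hlf
  set W : Submodule K M := t.sup Wf with hWdef
  have htW : ∀ m ∈ t, m ∈ W := fun m hm => Finset.le_sup (f := Wf) hm (hWmem m)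
  have hWfin : FiniteDimensional K ↥W :=
    Finset.sup_induction (p := fun N : Submodule K M => FiniteDimensional K ↥N)
      inferInstance
      (fun a ha b hb => by
        haveI : FiniteDimensional K ↥a := ha
        haveI : FiniteDimensional K ↥b := hb
        exact Submodule.finiteDimensional_sup a b)
      (fun m _ => hWfd m)
  have hWn' : ∀ (Y : 𝔫') (w : M), w ∈ W → ⁅(Y : 𝔤), w⁆ ∈ W := by
    have key := Finset.sup_induction (s := t) (f := Wf)
      (p := fun N : Submodule K M => ∀ (Y : 𝔫') (w : M), w ∈ N → ⁅(Y : 𝔤), w⁆ ∈ N)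
      (by intro Y w hw; rw [Submodule.mem_bot] at hw; simp [hw])
      (by
        intro a ha b hb Y w hw
        obtain ⟨wa, hwa, wb, hwb, rfl⟩ := Submodule.mem_sup.mp hw
        rw [lie_add]
        exact Submodule.add_mem _
          (Submodule.mem_sup_left (ha Y wa hwa))
          (Submodule.mem_sup_right (hb Y wb hwb)))
      (fun m _ => fun Y w hw => hWstab m Y w hw)
    exact key
  -- the 𝔥-submodule generated by W
  set V : LieSubmodule K ↥𝔥 M := LieSubmodule.lieSpan K ↥𝔥 (W : Set M) with hVdef
  have hWV : ∀ w ∈ W, w ∈ V := fun w hw => LieSubmodule.subset_lieSpan hw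
  have hVh : ∀ (H : 𝔥) (v : M), v ∈ V → ⁅(H : 𝔤), v⁆ ∈ V := fun H v hv => by
    have := V.lie_mem (x := H) hv
    rwa [LieSubalgebra.coe_bracket_of_module] at this
  -- V is 𝔫'-stable
  have hVn' : ∀ (Y : 𝔫') (v : M), v ∈ V → ⁅(Y : 𝔤), v⁆ ∈ V := by
    set P0 : Submodule K M := V.toSubmodule ⊓
      (⨅ Y : 𝔫', Submodule.comap (LieModule.toEnd K 𝔤 M (Y : 𝔤)) V.toSubmodule) with hP0
    have hmemP0 : ∀ m : M, m ∈ P0 ↔ m ∈ V ∧ ∀ Y : 𝔫', ⁅(Y : 𝔤), m⁆ ∈ V := by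
      intro m
      simp only [hP0, Submodule.mem_inf, Submodule.mem_iInf, Submodule.mem_comap,
        LieModule.toEnd_apply_apply]
      rfl
    set P : LieSubmodule K ↥𝔥 M :=
      { toSubmodule := P0
        lie_mem := by
          intro H m hm
          replace hm : m ∈ P0 := hm
          rw [hmemP0] at hm
          show ⁅H, m⁆ ∈ P0
          rw [LieSubalgebra.coe_bracket_of_module, hmemP0]
          refine ⟨hVh H m hm.1, fun Y => ?_⟩
          rw [leibniz_lie]
          have h1 : ⁅(Y : 𝔤), (H : 𝔤)⁆ ∈ 𝔫' := by
            rw [← lie_skew]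
            exact neg_mem (hhn' H Y)
          exact V.toSubmodule.add_mem (hm.2 ⟨_, h1⟩) (hVh H _ (hm.2 Y)) } with hPdef
    have hVP : V ≤ P := LieSubmodule.lieSpan_le.mpr (by
      intro w hw
      show w ∈ P0
      rw [hmemP0]
      exact ⟨hWV w hw, fun Y => hWV _ (hWn' Y w hw)⟩)
    intro Y v hv
    have := hVP hv
    rw [show (v ∈ P) = (v ∈ P0) from rfl, hmemP0] at this
    exact this.2 Y
  -- finite spanning set of W
  have hWfg : W.FG := Module.Finite.iff_fg.mp hWfin
  obtain ⟨u, hu⟩ := hWfg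
  -- weight decompositions
  have hdec : ∀ m : M, ∃ f : (𝔥 →ₗ[K] K) →₀ M,
      (∀ lam, f lam ∈ wtSpace 𝔥 M lam) ∧ (f.sum fun _ xi => xi) = m := by
    intro m
    have hm : m ∈ ⨆ lam, wtSpace 𝔥 M lam := by
      rw [hdiag.submodule_iSup_eq_top]; trivial
    exact (Submodule.mem_iSup_iff_exists_finsupp _ m).mp hm
  choose f hfwt hfsum using hdec
  set s : Finset M := u.biUnion (fun m => (f m).support.image (f m)) with hsdef
  have hs_wt : ∀ x ∈ s, ∃ lam : 𝔥 →ₗ[K] K, x ∈ wtSpace 𝔥 M lam := by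
    intro x hx
    rw [hsdef, Finset.mem_biUnion] at hx
    obtain ⟨m, _, hx⟩ := hx
    obtain ⟨lam, _, rfl⟩ := Finset.mem_image.mp hx
    exact ⟨lam, hfwt m lam⟩
  set Z : Submodule K M := Submodule.span K (s : Set M) with hZdef
  have hZu : ∀ m ∈ u, m ∈ Z := by
    intro m hm
    rw [← hfsum m]
    rw [Finsupp.sum]
    refine Submodule.sum_mem _ fun lam hlam => Submodule.subset_span ?_
    rw [hsdef]
    simp only [Finset.coe_biUnion, Set.mem_iUnion, Finset.mem_coe]
    exact ⟨m, hm, Finset.mem_image.mpr ⟨lam, hlam, rfl⟩⟩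
  have hWZ : W ≤ Z := by
    rw [← hu]
    exact Submodule.span_le.mpr fun m hm => hZu m hm
  have hZV : Z ≤ V.toSubmodule := by
    rw [hZdef]
    refine Submodule.span_le.mpr ?_
    intro x hx
    rw [Finset.mem_coe, hsdef, Finset.mem_biUnion] at hx
    obtain ⟨m, hmu, hx⟩ := hx
    obtain ⟨lam, hlam, rfl⟩ := Finset.mem_image.mp hx
    refine wt_component_mem V.toSubmodule hVh (f m).support (f m)
      (fun nu => hfwt m nu) ?_ lam hlam
    have : (∑ nu ∈ (f m).support, f m nu) = m := by
      conv_rhs => rw [← hfsum m]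
      rfl
    rw [this]
    exact hWV m (hu ▸ Submodule.subset_span (Finset.mem_coe.mpr hmu) : m ∈ W)
  have hZh : ∀ (H : 𝔥) (v : M), v ∈ Z → ⁅(H : 𝔤), v⁆ ∈ Z := by
    intro H
    have : Z ≤ Submodule.comap (LieModule.toEnd K 𝔤 M (H : 𝔤)) Z := by
      rw [hZdef]
      refine Submodule.span_le.mpr fun x hx => ?_
      obtain ⟨lam, hwt⟩ := hs_wt x (Finset.mem_coe.mp hx)
      simp only [SetLike.mem_coe, Submodule.mem_comap, LieModule.toEnd_apply_apply]
      rw [mem_wtSpace.mp hwt H]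
      exact Submodule.smul_mem _ _ (Submodule.subset_span hx)
    intro v hv
    have := this hv
    rwa [Submodule.mem_comap, LieModule.toEnd_apply_apply] at this
  have hVZ : V.toSubmodule ≤ Z := by
    set Zlie : LieSubmodule K ↥𝔥 M :=
      { toSubmodule := Z
        lie_mem := fun {H v} hv => by
          show ⁅H, v⁆ ∈ Z
          rw [LieSubalgebra.coe_bracket_of_module]
          exact hZh H v hv }
    have h1 : V ≤ Zlie := LieSubmodule.lieSpan_le.mpr
      (fun w hw => show w ∈ Z from hWZ hw)
    exact fun v hv => h1 hv
  have hZn' : ∀ (Y : 𝔫') (v : M), v ∈ Z → ⁅(Y : 𝔤), v⁆ ∈ Z :=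
    fun Y v hv => hVZ (hVn' Y v (hZV hv))
  -- the U(𝔫)-span of s
  set Q : LieSubmodule K ↥𝔫 M := LieSubmodule.lieSpan K ↥𝔫 (s : Set M) with hQdef
  have hZQ : Z ≤ Q.toSubmodule := Submodule.span_le.mpr
    fun x hx => LieSubmodule.subset_lieSpan hx
  have hQn : ∀ n : 𝔤, n ∈ 𝔫 → ∀ m ∈ Q, ⁅n, m⁆ ∈ Q := by
    intro n hn m hm
    have := Q.lie_mem (x := ⟨n, hn⟩) hm
    rwa [LieSubalgebra.coe_bracket_of_module] at this
  set B : Submodule K 𝔤 := 𝔫'.toSubmodule ⊔ 𝔥.toSubmodule with hBdef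
  have htop : B ⊔ 𝔫.toSubmodule = ⊤ := by rw [hBdef, ← htri]
  have hBZ : ∀ g ∈ B, ∀ v ∈ Z, ⁅g, v⁆ ∈ Z := by
    intro g hg v hv
    obtain ⟨y, hy, h, hh, rfl⟩ := Submodule.mem_sup.mp hg
    rw [add_lie]
    exact Z.add_mem (hZn' ⟨y, hy⟩ v hv) (hZh ⟨h, hh⟩ v hv)
  -- Q is stable under the action of B
  have hBQ : ∀ m ∈ Q, ∀ g ∈ B, ⁅g, m⁆ ∈ Q := by
    set P0 : Submodule K M := Q.toSubmodule ⊓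
      (⨅ g : B, Submodule.comap (LieModule.toEnd K 𝔤 M (g : 𝔤)) Q.toSubmodule) with hP0
    have hmemP0 : ∀ m : M, m ∈ P0 ↔ m ∈ Q ∧ ∀ g : B, ⁅(g : 𝔤), m⁆ ∈ Q := by
      intro m
      simp only [hP0, Submodule.mem_inf, Submodule.mem_iInf, Submodule.mem_comap,
        LieModule.toEnd_apply_apply]
      rfl
    set P : LieSubmodule K ↥𝔫 M :=
      { toSubmodule := P0
        lie_mem := by
          intro x m hm
          replace hm : m ∈ P0 := hm
          rw [hmemP0] at hm
          show ⁅x, m⁆ ∈ P0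
          rw [LieSubalgebra.coe_bracket_of_module, hmemP0]
          refine ⟨hQn _ x.2 m hm.1, fun g => ?_⟩
          rw [leibniz_lie]
          refine Q.toSubmodule.add_mem ?_ (hQn _ x.2 _ (hm.2 g))
          have hgx : ⁅(g : 𝔤), (x : 𝔤)⁆ ∈ B ⊔ 𝔫.toSubmodule := htop ▸ Submodule.mem_top
          obtain ⟨b, hb, n, hn, hbn⟩ := Submodule.mem_sup.mp hgx
          rw [← hbn, add_lie]
          exact Q.toSubmodule.add_mem (hm.2 ⟨b, hb⟩) (hQn n hn m hm.1) } with hPdef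
    have hQP : Q ≤ P := LieSubmodule.lieSpan_le.mpr (by
      intro x hx
      show x ∈ P0
      rw [hmemP0]
      exact ⟨LieSubmodule.subset_lieSpan hx, fun g =>
        hZQ (hBZ g g.2 x (Submodule.subset_span hx))⟩)
    intro m hm g hg
    have := hQP hm
    rw [show (m ∈ P) = (m ∈ P0) from rfl, hmemP0] at this
    exact this.2 ⟨g, hg⟩
  -- Q is a 𝔤-submodule
  set R : LieSubmodule K 𝔤 M :=
    { toSubmodule := Q.toSubmodule
      lie_mem := by
        intro g m hm
        have hg : g ∈ B ⊔ 𝔫.toSubmodule := htop ▸ Submodule.mem_top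
        obtain ⟨b, hb, n, hn, hbn⟩ := Submodule.mem_sup.mp hg
        show ⁅g, m⁆ ∈ Q.toSubmodule
        rw [← hbn, add_lie]
        exact Q.toSubmodule.add_mem (hBQ m hm b hb) (hQn n hn m hm) } with hRdef
  have hRtop : R = ⊤ := by
    rw [← top_le_iff, ← ht]
    exact LieSubmodule.lieSpan_le.mpr fun m hm => hZQ (hWZ (htW m hm))
  refine ⟨s, hs_wt, ?_⟩
  rw [← LieSubmodule.toSubmodule_eq_top]
  have : R.toSubmodule = ⊤ := by rw [hRtop]; rfl
  exact this
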